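/- Polynomial annihilation implies design-order accuracy of a dissipation stencil: let s ≥ 1, let x : Fin N → ℝ be nodes, let c : Fin N → ℝ be stencil coefficients satisfying ∑_j c_j (x_j)^k = 0 for every natural number k < s, and let x₀ ∈ ℝ. Then for every function f : ℝ → ℝ that is s-times continuously differentiable with |iteratedDeriv s f t| ≤ M for all t ∈ ℝ, one has |∑_j c_j f(x_j)| ≤ (M / s!) · ∑_j |c_j| · |x_j − x₀|^s. In particular a Taylor expansion of a row of the dissipation operator annihilating polynomials of degree ≤ s−1 contains only derivative terms of order at least s. -/

import Mathlib

open Set Finset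

private lemma myIteratedDerivWithin_eq {s : ℕ} {f : ℝ → ℝ} (hf : ContDiff ℝ (s : ℕ∞) f)
    {t : Set ℝ} (ht : UniqueDiffOn ℝ t) {m : ℕ} (hm : m ≤ s) {y : ℝ} (hy : y ∈ t) :
    iteratedDerivWithin m f t y = iteratedDeriv m f y := by
  have h := (contDiff_iff_ftaylorSeries.mp hf).hasFTaylorSeriesUpToOn t
  have h2 := h.eq_iteratedFDerivWithin_of_uniqueDiffOn (m := m) (by exact_mod_cast hm) ht hy
  rw [iteratedDerivWithin_eq_iteratedFDerivWithin, iteratedDeriv_eq_iteratedFDeriv, ← h2]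
  rfl

private lemma myTaylorBoundRight {s : ℕ} {f : ℝ → ℝ} (hf : ContDiff ℝ (s : ℕ∞) f)
    {M : ℝ} (hb : ∀ t, |iteratedDeriv s f t| ≤ M) {x₀ y : ℝ} (hxy : x₀ < y) (hs : 1 ≤ s) :
    |f y - ∑ k ∈ Finset.range s, (k.factorial : ℝ)⁻¹ * (y - x₀) ^ k * iteratedDeriv k f x₀|
      ≤ M / s.factorial * |y - x₀| ^ s := by
  obtain ⟨n, rfl⟩ : ∃ n, s = n + 1 := ⟨s - 1, (Nat.succ_pred_eq_of_pos hs).symm⟩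
  have hfn : ContDiffOn ℝ n f (Icc x₀ y) :=
    (hf.of_le (by exact_mod_cast Nat.le_succ n)).contDiffOn
  have hglob : Differentiable ℝ (iteratedDeriv n f) :=
    hf.differentiable_iteratedDeriv n (by exact_mod_cast n.lt_succ_self)
  have heq : Set.EqOn (iteratedDerivWithin n f (Icc x₀ y)) (iteratedDeriv n f) (Icc x₀ y) :=
    fun t ht => myIteratedDerivWithin_eq hf (uniqueDiffOn_Icc hxy) (Nat.le_succ n) ht
  have hf' : DifferentiableOn ℝ (iteratedDerivWithin n f (Icc x₀ y)) (Ioo x₀ y) :=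
    hglob.differentiableOn.congr fun t ht => heq (Ioo_subset_Icc_self ht)
  obtain ⟨x', hx', hrem⟩ := taylor_mean_remainder_lagrange hxy.ne
    (by rw [uIcc_of_le hxy.le]; exact hfn) (by rw [uIcc_of_le hxy.le, uIoo_of_lt hxy]; exact hf')
  rw [uIoo_of_lt hxy] at hx'
  rw [uIcc_of_le hxy.le] at hrem
  have hT : taylorWithinEval f n (Icc x₀ y) x₀ y
      = ∑ k ∈ Finset.range (n + 1),
          (k.factorial : ℝ)⁻¹ * (y - x₀) ^ k * iteratedDeriv k f x₀ := by
    rw [taylor_within_apply]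
    refine Finset.sum_congr rfl fun k hk => ?_
    have hk' : k ≤ n + 1 := by
      have := Finset.mem_range.mp hk; omega
    rw [myIteratedDerivWithin_eq hf (uniqueDiffOn_Icc hxy) hk' (left_mem_Icc.mpr hxy.le)]
    simp [smul_eq_mul, mul_assoc]
  rw [← hT, hrem,
    myIteratedDerivWithin_eq hf (uniqueDiffOn_Icc hxy) le_rfl (Ioo_subset_Icc_self hx')]
  rw [abs_div, abs_mul, abs_pow, Nat.abs_cast, div_le_iff₀ (by positivity)]
  have hM := hb x'
  calc |iteratedDeriv (n + 1) f x'| * |y - x₀| ^ (n + 1)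
      ≤ M * |y - x₀| ^ (n + 1) := by gcongr
    _ = M / ((n + 1).factorial : ℝ) * |y - x₀| ^ (n + 1) * ((n + 1).factorial : ℝ) := by
        field_simp

private lemma myTaylorBound {s : ℕ} {f : ℝ → ℝ} (hf : ContDiff ℝ (s : ℕ∞) f)
    {M : ℝ} (hb : ∀ t, |iteratedDeriv s f t| ≤ M) (x₀ y : ℝ) (hs : 1 ≤ s) :
    |f y - ∑ k ∈ Finset.range s, (k.factorial : ℝ)⁻¹ * (y - x₀) ^ k * iteratedDeriv k f x₀|
      ≤ M / s.factorial * |y - x₀| ^ s := by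
  rcases lt_trichotomy x₀ y with h | h | h
  · exact myTaylorBoundRight hf hb h hs
  · subst h
    have : ∑ k ∈ Finset.range s, (k.factorial : ℝ)⁻¹ * (x₀ - x₀) ^ k * iteratedDeriv k f x₀
        = f x₀ := by
      rw [Finset.sum_eq_single 0]
      · simp
      · intro k hk hk0
        simp [zero_pow hk0]
      · intro h0; exact absurd (Finset.mem_range.mpr hs) h0
    rw [this, sub_self, abs_zero, sub_self, abs_zero, zero_pow (by omega), mul_zero]
  · -- reflect
    set g : ℝ → ℝ := fun t => f (-t) with hg
    have hgc : ContDiff ℝ (s : ℕ∞) g := hf.comp contDiff_neg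
    have hgd : ∀ k t, iteratedDeriv k g t = (-1 : ℝ) ^ k * iteratedDeriv k f (-t) := by
      intro k t
      simpa [smul_eq_mul] using iteratedDeriv_comp_neg k f t
    have hgb : ∀ t, |iteratedDeriv s g t| ≤ M := by
      intro t
      rw [hgd]
      calc |(-1:ℝ) ^ s * iteratedDeriv s f (-t)| = |iteratedDeriv s f (-t)| := by
            rw [abs_mul, abs_pow, abs_neg, abs_one, one_pow, one_mul]
        _ ≤ M := hb _
    have key := myTaylorBoundRight (x₀ := -x₀) (y := -y) hgc hgb (by linarith) hs
    have hsum : ∑ k ∈ Finset.range s, (k.factorial : ℝ)⁻¹ * (-y - -x₀) ^ k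
          * iteratedDeriv k g (-x₀)
        = ∑ k ∈ Finset.range s, (k.factorial : ℝ)⁻¹ * (y - x₀) ^ k * iteratedDeriv k f x₀ := by
      refine Finset.sum_congr rfl fun k _ => ?_
      rw [hgd, neg_neg, show (-y - -x₀ : ℝ) = -(y - x₀) by ring, neg_pow]
      have h2 : ((-1 : ℝ)) ^ k * (-1 : ℝ) ^ k = 1 := by
        rw [← mul_pow]; norm_num
      calc (k.factorial : ℝ)⁻¹ * ((-1) ^ k * (y - x₀) ^ k) * ((-1) ^ k * iteratedDeriv k f x₀)
          = ((-1 : ℝ) ^ k * (-1 : ℝ) ^ k)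
            * ((k.factorial : ℝ)⁻¹ * (y - x₀) ^ k * iteratedDeriv k f x₀) := by ring
        _ = (k.factorial : ℝ)⁻¹ * (y - x₀) ^ k * iteratedDeriv k f x₀ := by rw [h2, one_mul]
    have hgy : g (-y) = f y := by simp [hg]
    rw [hgy, hsum] at key
    have habs : |-y - -x₀| = |y - x₀| := by
      rw [show (-y - -x₀ : ℝ) = -(y - x₀) by ring, abs_neg]
    rw [habs] at key
    exact key

/-- Polynomial annihilation implies design-order accuracy of a dissipation
stencil: if the coefficients `c` annihilate all monomials of degree `< s` at
the nodes `x`, then for any `s`-times continuously differentiable `f` with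
`s`-th derivative bounded by `M`, the stencil applied to `f` is bounded by
`(M / s!) · ∑ j, |c j| · |x j − x₀| ^ s`. -/
theorem stencil_design_order_accuracy
    (N s : ℕ) (hs : 1 ≤ s)
    (x c : Fin N → ℝ)
    (hann : ∀ k : ℕ, k < s → ∑ j, c j * (x j) ^ k = 0)
    (x₀ : ℝ) (M : ℝ)
    (f : ℝ → ℝ) (hf : ContDiff ℝ s f)
    (hbound : ∀ t : ℝ, |iteratedDeriv s f t| ≤ M) :
    |∑ j, c j * f (x j)| ≤ (M / s.factorial) * ∑ j, |c j| * |x j - x₀| ^ s := by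
  -- shifted annihilation
  have hshift : ∀ k : ℕ, k < s → ∑ j, c j * (x j - x₀) ^ k = 0 := by
    intro k hk
    have expand : ∀ j, c j * (x j - x₀) ^ k
        = ∑ i ∈ Finset.range (k + 1),
            (k.choose i : ℝ) * (-x₀) ^ (k - i) * (c j * x j ^ i) := by
      intro j
      rw [sub_eq_add_neg, add_pow, Finset.mul_sum]
      exact Finset.sum_congr rfl fun i _ => by ring
    simp_rw [expand]
    rw [Finset.sum_comm]
    refine Finset.sum_eq_zero fun i hi => ?_
    rw [← Finset.mul_sum, hann i (lt_of_le_of_lt (Nat.lt_succ_iff.mp (Finset.mem_range.mp hi)) hk),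
      mul_zero]
  set P : Fin N → ℝ := fun j =>
    ∑ k ∈ Finset.range s, (k.factorial : ℝ)⁻¹ * (x j - x₀) ^ k * iteratedDeriv k f x₀ with hP
  have hPzero : ∑ j, c j * P j = 0 := by
    simp_rw [hP, Finset.mul_sum]
    rw [Finset.sum_comm]
    refine Finset.sum_eq_zero fun k hk => ?_
    have : ∀ j, c j * ((k.factorial : ℝ)⁻¹ * (x j - x₀) ^ k * iteratedDeriv k f x₀)
        = ((k.factorial : ℝ)⁻¹ * iteratedDeriv k f x₀) * (c j * (x j - x₀) ^ k) :=
      fun j => by ring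
    simp_rw [this]
    rw [← Finset.mul_sum, hshift k (Finset.mem_range.mp hk), mul_zero]
  have key : ∀ j, |f (x j) - P j| ≤ M / s.factorial * |x j - x₀| ^ s :=
    fun j => myTaylorBound hf hbound x₀ (x j) hs
  have split : ∑ j, c j * f (x j) = ∑ j, c j * (f (x j) - P j) := by
    rw [Finset.sum_congr rfl (fun j _ => by ring : ∀ j ∈ Finset.univ,
      c j * (f (x j) - P j) = c j * f (x j) - c j * P j), Finset.sum_sub_distrib, hPzero, sub_zero]
  rw [split]
  calc |∑ j, c j * (f (x j) - P j)| ≤ ∑ j, |c j * (f (x j) - P j)| :=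
        Finset.abs_sum_le_sum_abs _ _
    _ = ∑ j, |c j| * |f (x j) - P j| := by simp_rw [abs_mul]
    _ ≤ ∑ j, |c j| * (M / s.factorial * |x j - x₀| ^ s) := by
        refine Finset.sum_le_sum fun j _ => ?_
        exact mul_le_mul_of_nonneg_left (key j) (abs_nonneg _)
    _ = (M / s.factorial) * ∑ j, |c j| * |x j - x₀| ^ s := by
        rw [Finset.mul_sum]
        exact Finset.sum_congr rfl fun j _ => by ring
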